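/- For any symmetric positive semi-definite matrix Σ in ℝ^{d×d}, any subspace V of ℝ^d with orthogonal projection matrix P_V, and any n ≥ 0, it holds that Σ_{i=1}^n λ_i(Σ) ≤ n·λ_1((I − P_V)Σ(I − P_V)) + Tr(P_V Σ P_V), where λ_i denotes the i-th largest eigenvalue. -/

import Mathlib

set_option maxHeartbeats 1000000


open Matrix

lemma psd_trace_nonneg {d : ℕ} {A : Matrix (Fin d) (Fin d) ℝ} (hA : A.PosSemidef) :
    0 ≤ A.trace := by
  rw [Matrix.trace]
  refine Finset.sum_nonneg fun i _ => ?_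
  have h := hA.dotProduct_mulVec_nonneg (Pi.single i 1)
  simpa [dotProduct, Pi.single_apply, Matrix.mulVec, Matrix.diag] using h

lemma trace_conj_nonneg {d : ℕ} {A : Matrix (Fin d) (Fin d) ℝ} (hA : A.PosSemidef)
    (B : Matrix (Fin d) (Fin d) ℝ) : 0 ≤ (Bᵀ * A * B).trace := by
  have := hA.conjTranspose_mul_mul_same B
  rw [Matrix.conjTranspose_eq_transpose_of_trivial] at this
  exact psd_trace_nonneg this

lemma transfer_psd {d : ℕ} {c : ℝ} (hc : 0 ≤ c) (A : Matrix (Fin d) (Fin d) ℝ)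
    (h : (c • (1 : Matrix (Fin d) (Fin d) ℝ) - A * Aᵀ).PosSemidef) :
    (c • (1 : Matrix (Fin d) (Fin d) ℝ) - Aᵀ * A).PosSemidef := by
  refine Matrix.PosSemidef.of_dotProduct_mulVec_nonneg ?_ ?_
  · have h1 : (Aᵀ * A).IsHermitian := by
      simpa [Matrix.conjTranspose_eq_transpose_of_trivial] using
        (Matrix.posSemidef_conjTranspose_mul_self A).isHermitian
    have hsm : ((c : ℝ) • (1 : Matrix (Fin d) (Fin d) ℝ)).IsHermitian := by
      simp [Matrix.IsHermitian]
    exact hsm.sub h1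
  · intro x
    have quad : ∀ (M : Matrix (Fin d) (Fin d) ℝ) (y : Fin d → ℝ),
        star y ⬝ᵥ ((c • (1 : Matrix (Fin d) (Fin d) ℝ) - M) *ᵥ y)
          = c * (y ⬝ᵥ y) - y ⬝ᵥ (M *ᵥ y) := by
      intro M y
      simp [Matrix.sub_mulVec, Matrix.smul_mulVec, dotProduct_sub, dotProduct_smul,
        smul_eq_mul]
    rw [quad]
    set y := A *ᵥ x with hy
    have hAx : x ⬝ᵥ ((Aᵀ * A) *ᵥ x) = y ⬝ᵥ y := by
      rw [← Matrix.mulVec_mulVec, Matrix.dotProduct_mulVec, Matrix.vecMul_transpose]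
    have h2 := h.dotProduct_mulVec_nonneg y
    rw [quad] at h2
    have hAy : y ⬝ᵥ ((A * Aᵀ) *ᵥ y) = (Aᵀ *ᵥ y) ⬝ᵥ (Aᵀ *ᵥ y) := by
      rw [← Matrix.mulVec_mulVec, Matrix.dotProduct_mulVec, ← Matrix.mulVec_transpose]
    rw [hAy] at h2
    set z := Aᵀ *ᵥ y with hz
    have ht : y ⬝ᵥ y = x ⬝ᵥ z := by
      rw [hz, hy, Matrix.dotProduct_mulVec, ← Matrix.mulVec_transpose,
        dotProduct_comm]
    -- Cauchy-Schwarz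
    have hcs : (x ⬝ᵥ z) ^ 2 ≤ (x ⬝ᵥ x) * (z ⬝ᵥ z) := by
      simpa [dotProduct, pow_two] using
        Finset.sum_mul_sq_le_sq_mul_sq Finset.univ x z
    have hy0 : 0 ≤ y ⬝ᵥ y := Finset.sum_nonneg fun i _ => mul_self_nonneg _
    have hx0 : 0 ≤ x ⬝ᵥ x := Finset.sum_nonneg fun i _ => mul_self_nonneg _
    have hz0 : 0 ≤ z ⬝ᵥ z := Finset.sum_nonneg fun i _ => mul_self_nonneg _
    rw [hAx]
    nlinarith [mul_le_mul_of_nonneg_left h2 hx0, mul_nonneg hc hx0, hcs, ht, hy0,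
      sq_nonneg (y ⬝ᵥ y - c * (x ⬝ᵥ x))]

lemma lamMax_psd {d : ℕ} [Nonempty (Fin d)] {A : Matrix (Fin d) (Fin d) ℝ}
    (hA : A.IsHermitian) :
    ((⨆ i, hA.eigenvalues i) • (1 : Matrix (Fin d) (Fin d) ℝ) - A).PosSemidef := by
  set c := ⨆ i, hA.eigenvalues i with hc
  set V : Matrix (Fin d) (Fin d) ℝ := (hA.eigenvectorUnitary : Matrix (Fin d) (Fin d) ℝ) with hV
  have hVV : V * star V = 1 := hA.eigenvectorUnitary.2.2
  have hA' : A = V * diagonal hA.eigenvalues * star V := by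
    simpa using hA.spectral_theorem
  have key : c • (1 : Matrix (Fin d) (Fin d) ℝ) - A
      = V * diagonal (fun i => c - hA.eigenvalues i) * star V := by
    have h1 : c • (1 : Matrix (Fin d) (Fin d) ℝ)
        = V * (c • (1 : Matrix (Fin d) (Fin d) ℝ)) * star V := by
      rw [Matrix.mul_smul, Matrix.smul_mul, mul_one, hVV]
    have h2 : diagonal (fun i => c - hA.eigenvalues i)
        = c • (1 : Matrix (Fin d) (Fin d) ℝ) - diagonal hA.eigenvalues := by
      ext i j
      by_cases h : i = j <;> simp [Matrix.diagonal, Matrix.one_apply, h]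
    rw [h2, Matrix.mul_sub, Matrix.sub_mul, ← h1, ← hA']
  rw [key]
  have hdiag : (diagonal (fun i => c - hA.eigenvalues i)).PosSemidef := by
    refine Matrix.posSemidef_diagonal_iff.mpr fun i => ?_
    have : hA.eigenvalues i ≤ c := le_ciSup (Set.finite_range _).bddAbove i
    linarith
  have := hdiag.mul_mul_conjTranspose_same V
  simpa [Matrix.star_eq_conjTranspose] using this

/-- For a symmetric p.s.d. matrix `Sig` and an orthogonal projection `P`, the sum of
the `n` largest eigenvalues of `Sig` is at most
`n·λ₁((I−P)Sig(I−P)) + Tr(P Sig P)`. -/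
theorem stmt6 (d n : ℕ) (Sig P : Matrix (Fin d) (Fin d) ℝ)
    (hpsd : Sig.PosSemidef) (hherm : Sig.IsHermitian)
    (hP : P * P = P) (hPt : Pᵀ = P)
    (hM : ((1 - P) * Sig * (1 - P)).IsHermitian)
    (es : Fin d → ℝ) (hanti : Antitone es)
    (hperm : ∃ e : Equiv.Perm (Fin d), ∀ i, hherm.eigenvalues i = es (e i)) :
    ∑ i : Fin d, (if (i : ℕ) < n then es i else 0) ≤
      (n : ℝ) * (⨆ i, hM.eigenvalues i) + Matrix.trace (P * Sig * P) := by
  rcases isEmpty_or_nonempty (Fin d) with hd | hd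
  · simp [Matrix.trace]
  obtain ⟨e, he⟩ := hperm
  have hlam0 : ∀ i, 0 ≤ hherm.eigenvalues i := fun i => hpsd.eigenvalues_nonneg i
  set lam : Fin d → ℝ := hherm.eigenvalues with hlam
  set V : Matrix (Fin d) (Fin d) ℝ := (hherm.eigenvectorUnitary : Matrix (Fin d) (Fin d) ℝ)
    with hV
  have hVV : star V * V = 1 := hherm.eigenvectorUnitary.2.1
  set Mk : (Fin d → ℝ) → Matrix (Fin d) (Fin d) ℝ := fun f => V * diagonal f * star V with hMk
  have hmul : ∀ f g, Mk f * Mk g = Mk (fun i => f i * g i) := by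
    intro f g
    calc Mk f * Mk g = V * diagonal f * ((star V * V) * (diagonal g * star V)) := by
          simp only [hMk, Matrix.mul_assoc]
      _ = V * (diagonal f * diagonal g) * star V := by
          rw [hVV, one_mul]; simp only [Matrix.mul_assoc]
      _ = Mk (fun i => f i * g i) := by rw [Matrix.diagonal_mul_diagonal]
  have hadd : ∀ f g, Mk f + Mk g = Mk (fun i => f i + g i) := by
    intro f g
    simp only [hMk]
    rw [← Matrix.add_mul, ← Matrix.mul_add, ← Matrix.diagonal_add]
  have htr : ∀ f, (Mk f).trace = ∑ i, f i := by
    intro f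
    rw [hMk]
    rw [Matrix.trace_mul_cycle, hVV, one_mul, Matrix.trace_diagonal]
  have hsym : ∀ f, (Mk f)ᵀ = Mk f := by
    intro f
    have h1 : (Mk f)ᴴ = Mk f := by
      simp only [hMk, Matrix.star_eq_conjTranspose, Matrix.conjTranspose_mul,
        Matrix.conjTranspose_conjTranspose, Matrix.diagonal_conjTranspose, star_trivial,
        Matrix.mul_assoc]
    rw [← Matrix.conjTranspose_eq_transpose_of_trivial, h1]
  have hpsdMk : ∀ f, (∀ i, 0 ≤ f i) → (Mk f).PosSemidef := by
    intro f hf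
    have := (Matrix.posSemidef_diagonal_iff.mpr hf).mul_mul_conjTranspose_same V
    simpa [Matrix.star_eq_conjTranspose, hMk] using this
  have hSig : Sig = Mk lam := by simpa using hherm.spectral_theorem
  set indf : Fin d → ℝ := fun i => if (e i : ℕ) < n then 1 else 0 with hindf
  set g : Fin d → ℝ := fun i => Real.sqrt (lam i) * indf i with hg
  set W := Mk g with hW
  set Q : Matrix (Fin d) (Fin d) ℝ := 1 - P with hQ
  have hQt : Qᵀ = Q := by rw [hQ, Matrix.transpose_sub, Matrix.transpose_one, hPt]
  have hQQ : Q * Q = Q := by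
    rw [hQ]
    simp [Matrix.sub_mul, Matrix.mul_sub, hP]
  have hWW : W * W = Mk (fun i => lam i * indf i) := by
    rw [hW, hmul]
    refine congrArg Mk (funext fun i => ?_)
    by_cases h : (e i : ℕ) < n <;>
      simp [hg, hindf, h, Real.mul_self_sqrt (hlam0 i)]
  -- LHS as a trace
  have hLHS : ∑ i : Fin d, (if (i : ℕ) < n then es i else 0) = (W * W).trace := by
    rw [hWW, htr, ← Equiv.sum_comp e (fun j : Fin d => if (j : ℕ) < n then es j else 0)]
    refine Finset.sum_congr rfl fun i _ => ?_
    by_cases h : (e i : ℕ) < n <;> simp [hindf, h, ← he i]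
  -- split the trace
  have hsplit : W * W = W * P * W + W * Q * W := by
    rw [hQ, Matrix.mul_sub, Matrix.sub_mul, Matrix.mul_one]
    abel
  -- bound the P part
  have hPW : (W * P * W).trace = (P * (W * W) * P).trace := by
    calc (W * P * W).trace
        = (W * (W * P)).trace := Matrix.trace_mul_comm _ _
      _ = ((W * W) * P).trace := by rw [Matrix.mul_assoc W W P]
      _ = (P * (W * W)).trace := Matrix.trace_mul_comm _ _
      _ = ((P * P) * (W * W)).trace := by rw [hP]
      _ = (P * (P * (W * W))).trace := by rw [Matrix.mul_assoc P P (W * W)]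
      _ = ((P * (W * W)) * P).trace := (Matrix.trace_mul_comm _ _).symm
  have hrest : P * Sig * P
      = P * (W * W) * P + P * (Mk fun i => lam i * (1 - indf i)) * P := by
    rw [← Matrix.add_mul, ← Matrix.mul_add, hWW, hadd]
    have : Sig = Mk fun i => lam i * indf i + lam i * (1 - indf i) := by
      rw [hSig]
      exact congrArg Mk (funext fun i => by ring)
    rw [← this]
  have hps2 : (Mk fun i => lam i * (1 - indf i)).PosSemidef := by
    refine hpsdMk _ fun i => ?_
    by_cases h : (e i : ℕ) < n <;> simp [hindf, h, hlam0 i]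
  have hboundP : (W * P * W).trace ≤ (P * Sig * P).trace := by
    have h0 := trace_conj_nonneg hps2 P
    rw [hPt] at h0
    rw [hPW, hrest, Matrix.trace_add]
    linarith
  -- bound the Q part
  have hQpsd : (Q * Sig * Q).PosSemidef := by
    have := hpsd.mul_mul_conjTranspose_same Q
    rwa [Matrix.conjTranspose_eq_transpose_of_trivial, hQt] at this
  have hlamQ0 : 0 ≤ ⨆ i, hM.eigenvalues i := by
    obtain ⟨i⟩ := hd
    have h1 : 0 ≤ hM.eigenvalues i := by
      have h2 : ((1 - P) * Sig * (1 - P)).PosSemidef := by rw [← hQ]; exact hQpsd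
      exact h2.eigenvalues_nonneg i
    exact le_trans h1 (le_ciSup (Set.finite_range _).bddAbove i)
  set lamQ : ℝ := ⨆ i, hM.eigenvalues i with hlamQ
  have hkey : (lamQ • (1 : Matrix (Fin d) (Fin d) ℝ) - Q * Sig * Q).PosSemidef := by
    have := lamMax_psd hM
    rwa [← hlamQ] at this
  set Sq := Mk (fun i => Real.sqrt (lam i)) with hSq
  set Pi' := Mk indf with hPi
  have hSqt : Sqᵀ = Sq := by rw [hSq]; exact hsym _
  have hPit : Pi'ᵀ = Pi' := by rw [hPi]; exact hsym _
  have hSS : Sq * Sq = Sig := by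
    rw [hSq, hmul, hSig]
    exact congrArg Mk (funext fun i => Real.mul_self_sqrt (hlam0 i))
  have hQS : (Q * Sq) * (Q * Sq)ᵀ = Q * Sig * Q := by
    rw [Matrix.transpose_mul, hQt, hSqt, ← hSS]
    calc (Q * Sq) * (Sq * Q) = Q * (Sq * (Sq * Q)) := by
          rw [Matrix.mul_assoc Q Sq (Sq * Q)]
      _ = Q * ((Sq * Sq) * Q) := by rw [Matrix.mul_assoc Sq Sq Q]
      _ = Q * (Sq * Sq) * Q := by rw [Matrix.mul_assoc Q (Sq * Sq) Q]
  have htransfer := transfer_psd hlamQ0 (Q * Sq) (by rw [hQS]; exact hkey)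
  have hSQS : (Q * Sq)ᵀ * (Q * Sq) = Sq * Q * Sq := by
    rw [Matrix.transpose_mul, hQt, hSqt]
    calc (Sq * Q) * (Q * Sq) = Sq * (Q * (Q * Sq)) := by
          rw [Matrix.mul_assoc Sq Q (Q * Sq)]
      _ = Sq * ((Q * Q) * Sq) := by rw [Matrix.mul_assoc Q Q Sq]
      _ = Sq * (Q * Sq) := by rw [hQQ]
      _ = Sq * Q * Sq := by rw [Matrix.mul_assoc Sq Q Sq]
  rw [hSQS] at htransfer
  have h3 := trace_conj_nonneg htransfer Pi'
  rw [hPit] at h3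
  have hPiPi : Pi' * Pi' = Pi' := by
    rw [hPi, hmul]
    refine congrArg Mk (funext fun i => ?_)
    by_cases h : (e i : ℕ) < n <;> simp [hindf, h]
  have hexpand : Pi' * (lamQ • (1 : Matrix (Fin d) (Fin d) ℝ) - Sq * Q * Sq) * Pi'
      = lamQ • Pi' - Pi' * (Sq * Q * Sq) * Pi' := by
    rw [Matrix.mul_sub, Matrix.sub_mul, Matrix.mul_smul, Matrix.smul_mul, mul_one, hPiPi]
  rw [hexpand] at h3
  have hWQW : W * Q * W = Pi' * (Sq * Q * Sq) * Pi' := by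
    have hw1 : W = Sq * Pi' := by
      rw [hW, hSq, hPi, hmul, hg]
    have hw2 : W = Pi' * Sq := by
      rw [hW, hSq, hPi, hmul, hg]
      exact congrArg Mk (funext fun i => mul_comm _ _)
    calc W * Q * W = (Pi' * Sq) * Q * (Sq * Pi') := by rw [← hw1, ← hw2]
      _ = Pi' * (Sq * (Q * (Sq * Pi'))) := by
        rw [Matrix.mul_assoc (Pi' * Sq) Q (Sq * Pi'), Matrix.mul_assoc Pi' Sq (Q * (Sq * Pi'))]
      _ = Pi' * ((Sq * Q) * (Sq * Pi')) := by rw [Matrix.mul_assoc Sq Q (Sq * Pi')]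
      _ = Pi' * (((Sq * Q) * Sq) * Pi') := by rw [Matrix.mul_assoc (Sq * Q) Sq Pi']
      _ = Pi' * (Sq * Q * Sq) * Pi' := by rw [Matrix.mul_assoc Pi' (Sq * Q * Sq) Pi']
  have htrPi : Pi'.trace ≤ (n : ℝ) := by
    have hsum : ∑ i : Fin d, (if ((e i : Fin d) : ℕ) < n then (1 : ℝ) else 0)
        = ∑ j : Fin d, (if (j : ℕ) < n then (1 : ℝ) else 0) :=
      Equiv.sum_comp e (fun j : Fin d => if (j : ℕ) < n then (1 : ℝ) else 0)
    rw [hPi, htr]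
    simp only [hindf]
    rw [hsum, Finset.sum_ite, Finset.sum_const, Finset.sum_const_zero, add_zero, nsmul_eq_mul,
      mul_one]
    have hcard : (Finset.univ.filter fun j : Fin d => (j : ℕ) < n).card ≤ n := by
      have := Finset.card_le_card_of_injOn (fun j : Fin d => (j : ℕ))
        (s := Finset.univ.filter fun j : Fin d => (j : ℕ) < n)
        (t := Finset.range n)
        (fun a ha => by
          rw [Finset.mem_coe, Finset.mem_filter] at ha
          exact Finset.mem_coe.mpr (Finset.mem_range.mpr ha.2))
        (fun a _ b _ hab => Fin.val_injective hab)
      simpa using this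
    exact_mod_cast hcard
  have hboundQ : (W * Q * W).trace ≤ (n : ℝ) * lamQ := by
    rw [hWQW]
    have h4 : (Pi' * (Sq * Q * Sq) * Pi').trace ≤ lamQ * Pi'.trace := by
      rw [Matrix.trace_sub, Matrix.trace_smul, smul_eq_mul] at h3
      linarith
    calc (Pi' * (Sq * Q * Sq) * Pi').trace ≤ lamQ * Pi'.trace := h4
      _ ≤ lamQ * n := mul_le_mul_of_nonneg_left htrPi hlamQ0
      _ = (n : ℝ) * lamQ := mul_comm _ _
  -- assemble
  rw [hLHS, hsplit, Matrix.trace_add]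
  have := add_le_add hboundP hboundQ
  linarith
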